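/- With φ as above: if p and q are separations of order k−1 such that φ(p) ∩ φ(q) ∉ {∅, 𝒫}, then p ∨ q has order at most k−1 (so p ∨ q ∈ S_k). -/

import Mathlib

open Set

variable {α : Type*}

/-- `star` is an order-reversing involution on the lattice `α` (making `α` a universe of
separations). -/
def IsUnivStar [Lattice α] (star : α → α) : Prop :=
  (∀ a, star (star a) = a) ∧ ∀ a b, a ≤ b → star b ≤ star a

/-- `ord` is an order function on the universe: symmetric under `star` and submodular. -/
def IsOrderFn [Lattice α] (star : α → α) (ord : α → ℕ∞) : Prop :=
  (∀ a, ord (star a) = ord a) ∧ ∀ a b, ord (a ⊔ b) + ord (a ⊓ b) ≤ ord a + ord b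

/-- A (regular) `k`-profile of the universe: a strongly consistent orientation of the separations
of order `< k` satisfying the profile property. -/
def IsProfileU [Lattice α] (star : α → α) (ord : α → ℕ∞) (k : ℕ) (P : Set α) : Prop :=
  (∀ a ∈ P, ord a < (k : ℕ∞)) ∧
  (∀ a, ord a < (k : ℕ∞) → (a ∈ P ↔ star a ∉ P)) ∧
  (∀ a b : α, ord a < (k : ℕ∞) → a ≤ b → b ∈ P → a ∈ P) ∧
  (∀ a ∈ P, ∀ b ∈ P, ord (a ⊔ b) < (k : ℕ∞) → star (a ⊔ b) ∉ P)

/-- `phi star Ps p` is the set of profiles in `Ps` that contain the inverse of `p`. -/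
def phi [Lattice α] (star : α → α) (Ps : Set (Set α)) (p : α) : Set (Set α) :=
  {P ∈ Ps | star p ∈ P}

/-- An antitone involution on a lattice is automatically a lattice anti-automorphism:
De Morgan's law for infima. -/
lemma star_inf_eq [Lattice α] {star : α → α} (hstar : IsUnivStar star) (a b : α) :
    star (a ⊓ b) = star a ⊔ star b := by
  obtain ⟨hinv, hanti⟩ := hstar
  apply le_antisymm
  · have h1 : star (star a ⊔ star b) ≤ a := by
      have := hanti _ _ (le_sup_left : star a ≤ star a ⊔ star b)
      simpa [hinv] using this
    have h2 : star (star a ⊔ star b) ≤ b := by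
      have := hanti _ _ (le_sup_right : star b ≤ star a ⊔ star b)
      simpa [hinv] using this
    have h3 := hanti _ _ (le_inf h1 h2)
    simpa [hinv] using h3
  · exact sup_le (hanti _ _ inf_le_left) (hanti _ _ inf_le_right)

/-- If `p` and `q` have order `k - 1` and `φ(p) ∩ φ(q) ∉ {∅, 𝒫}`, then `p ⊔ q` has order at
most `k - 1`. -/
theorem stmt15 [Lattice α] (star : α → α) (ord : α → ℕ∞)
    (hstar : IsUnivStar star) (hord : IsOrderFn star ord)
    (k : ℕ) (hk : 1 ≤ k) (Ps : Set (Set α)) (hPs : Ps.Nonempty)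
    (hprof : ∀ P ∈ Ps, IsProfileU star ord k P)
    (htrunc : ∀ P₁ ∈ Ps, ∀ P₂ ∈ Ps,
      {a ∈ P₁ | ord a < ((k - 1 : ℕ) : ℕ∞)} = {a ∈ P₂ | ord a < ((k - 1 : ℕ) : ℕ∞)})
    (p q : α) (hp : ord p = ((k - 1 : ℕ) : ℕ∞)) (hq : ord q = ((k - 1 : ℕ) : ℕ∞))
    (hne : phi star Ps p ∩ phi star Ps q ≠ ∅)
    (hnePs : phi star Ps p ∩ phi star Ps q ≠ Ps) :
    ord (p ⊔ q) ≤ ((k - 1 : ℕ) : ℕ∞) := by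
  have hinv := hstar.1
  -- `k - 1 < k`
  have hnk : (((k - 1 : ℕ) : ℕ∞)) < (k : ℕ∞) := by
    exact_mod_cast Nat.sub_lt (by omega) one_pos
  have hordp : ord p < (k : ℕ∞) := hp ▸ hnk
  have hordq : ord q < (k : ℕ∞) := hq ▸ hnk
  -- a profile `P` with `star p ∈ P` and `star q ∈ P`
  obtain ⟨P, hPint⟩ := nonempty_iff_ne_empty.2 hne
  obtain ⟨⟨hPmem, hsp⟩, ⟨-, hsq⟩⟩ := hPint
  -- a profile `Q` outside the intersection
  have hsubPs : phi star Ps p ∩ phi star Ps q ⊆ Ps := fun X hX => hX.1.1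
  obtain ⟨Q, hQPs, hQnot⟩ : ∃ Q ∈ Ps, Q ∉ phi star Ps p ∩ phi star Ps q := by
    by_contra h
    push_neg at h
    exact hnePs (Subset.antisymm hsubPs h)
  obtain ⟨hQ1, hQ2, hQ3, hQ4⟩ := hprof Q hQPs
  obtain ⟨hP1, hP2, hP3, hP4⟩ := hprof P hPmem
  -- `p ∈ Q` or `q ∈ Q`
  have hpq : p ∈ Q ∨ q ∈ Q := by
    rcases not_and_or.1 (fun h : Q ∈ phi star Ps p ∧ Q ∈ phi star Ps q =>
        hQnot ⟨h.1, h.2⟩) with h | h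
    · exact Or.inl ((hQ2 p hordp).2 fun hc => h ⟨hQPs, hc⟩)
    · exact Or.inr ((hQ2 q hordq).2 fun hc => h ⟨hQPs, hc⟩)
  -- assume for contradiction that `ord (p ⊔ q) > k - 1`
  by_contra hcon
  push_neg at hcon
  have hsubmod := hord.2 p q
  rw [hp, hq] at hsubmod
  -- then `ord (p ⊓ q) < k - 1` by submodularity
  have hlow : ord (p ⊓ q) < ((k - 1 : ℕ) : ℕ∞) := by
    by_contra h2
    push_neg at h2
    have h3 : (((k - 1 : ℕ) : ℕ∞)) + 1 ≤ ord (p ⊔ q) := Order.add_one_le_of_lt hcon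
    have h4 : (((k - 1 : ℕ) : ℕ∞)) + 1 + ((k - 1 : ℕ) : ℕ∞) ≤
        ((k - 1 : ℕ) : ℕ∞) + ((k - 1 : ℕ) : ℕ∞) :=
      le_trans (add_le_add h3 h2) hsubmod
    have h5 : ((k - 1 + 1 + (k - 1) : ℕ) : ℕ∞) ≤ ((k - 1 + (k - 1) : ℕ) : ℕ∞) := by
      exact_mod_cast h4
    have h6 : k - 1 + 1 + (k - 1) ≤ k - 1 + (k - 1) := by exact_mod_cast h5
    omega
  have hlowk : ord (p ⊓ q) < (k : ℕ∞) := lt_trans hlow hnk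
  -- `p ⊓ q ∈ Q` by consistency
  have hinQ : p ⊓ q ∈ Q := by
    rcases hpq with h | h
    · exact hQ3 (p ⊓ q) p hlowk inf_le_left h
    · exact hQ3 (p ⊓ q) q hlowk inf_le_right h
  -- hence `p ⊓ q ∈ P` by common truncation
  have hinP : p ⊓ q ∈ P := by
    have hmem : p ⊓ q ∈ {a ∈ Q | ord a < ((k - 1 : ℕ) : ℕ∞)} := ⟨hinQ, hlow⟩
    rw [htrunc Q hQPs P hPmem] at hmem
    exact hmem.1
  -- but the profile property of `P` forbids this
  have hDM : star p ⊔ star q = star (p ⊓ q) := (star_inf_eq hstar p q).symm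
  have hordsup : ord (star p ⊔ star q) < (k : ℕ∞) := by
    rw [hDM, hord.1]
    exact hlowk
  have := hP4 (star p) hsp (star q) hsq hordsup
  rw [hDM, hinv] at this
  exact this hinP
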